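/- Let S > 0 and let g : ℝ → ℝ be a bounded measurable nonnegative function with support contained in (0, S]. Define v(t,r) = (4πt)^{−1/2} ∫₀^∞ k(t,r,s) g(s) ds. Then for every t > 0: v(t,r) ≥ 0 for all r > 0, and the partial derivative ∂ᵣ v(t,r) satisfies ∂ᵣ v(t,r) ≤ 0 for every r ≥ √(2t) + S. -/

import Mathlib

open MeasureTheory

/-- `k(t,r,s) = exp(-(r-s)²/(4t)) - exp(-(r+s)²/(4t))`,
the (unnormalized) Dirichlet heat kernel of the half-line. -/
noncomputable def halfLineKernel (t r s : ℝ) : ℝ :=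
  Real.exp (-(r - s) ^ 2 / (4 * t)) - Real.exp (-(r + s) ^ 2 / (4 * t))

/-- `v(t,r) = (4πt)^{-1/2} ∫₀^∞ k(t,r,s) g(s) ds`. -/
noncomputable def halfLineSol (g : ℝ → ℝ) (t r : ℝ) : ℝ :=
  (4 * Real.pi * t) ^ (-(1 : ℝ) / 2) * ∫ s in Set.Ioi (0 : ℝ), halfLineKernel t r s * g s

/-- `x ↦ x e^{-x²/(4t)}` is antitone on `[√(2t), ∞)`. -/
lemma auxA {t : ℝ} (ht : 0 < t) :
    AntitoneOn (fun x : ℝ => x * Real.exp (-x ^ 2 / (4 * t)))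
      (Set.Ici (Real.sqrt (2 * t))) := by
  apply antitoneOn_of_hasDerivWithinAt_nonpos (convex_Ici _)
      (f' := fun x => Real.exp (-x ^ 2 / (4 * t)) * (1 - x ^ 2 / (2 * t)))
  · fun_prop
  · intro x hx
    have h1 : HasDerivAt (fun x : ℝ => -x ^ 2 / (4 * t)) (-(2 * x) / (4 * t)) x := by
      simpa using ((hasDerivAt_pow 2 x).neg.div_const (4 * t))
    have h2 := h1.exp
    have h3 := (hasDerivAt_id' x).fun_mul h2
    have h4 : HasDerivAt (fun x : ℝ => x * Real.exp (-x ^ 2 / (4 * t)))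
        (Real.exp (-x ^ 2 / (4 * t)) * (1 - x ^ 2 / (2 * t))) x := by
      refine HasDerivAt.congr_deriv h3 ?_
      field_simp
      ring
    exact h4.hasDerivWithinAt
  · intro x hx
    rw [interior_Ici] at hx
    have hx' : Real.sqrt (2 * t) ≤ x := le_of_lt hx
    have h2t : (0 : ℝ) ≤ 2 * t := by linarith
    have hxsq : 2 * t ≤ x ^ 2 := by
      have := Real.sq_sqrt h2t
      nlinarith [Real.sqrt_nonneg (2 * t)]
    have : 1 - x ^ 2 / (2 * t) ≤ 0 := by
      rw [sub_nonpos, le_div_iff₀ (by linarith : (0:ℝ) < 2 * t)]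
      linarith
    exact mul_nonpos_of_nonneg_of_nonpos (Real.exp_nonneg _) this

/-- For fixed `s > 0`, the kernel is antitone in `r` on `[√(2t)+s, ∞)`. -/
lemma auxB {t s : ℝ} (ht : 0 < t) (hs : 0 < s) :
    AntitoneOn (fun r => halfLineKernel t r s)
      (Set.Ici (Real.sqrt (2 * t) + s)) := by
  apply antitoneOn_of_hasDerivWithinAt_nonpos (convex_Ici _)
      (f' := fun r => ((r + s) * Real.exp (-(r + s) ^ 2 / (4 * t))
        - (r - s) * Real.exp (-(r - s) ^ 2 / (4 * t))) / (2 * t))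
  · unfold halfLineKernel; fun_prop
  · intro r hr
    have e1 : HasDerivAt (fun r : ℝ => -(r - s) ^ 2 / (4 * t))
        (-(2 * (r - s) ^ 1 * 1) / (4 * t)) r :=
      (((hasDerivAt_id r).sub_const s).pow 2).neg.div_const (4 * t)
    have e2 : HasDerivAt (fun r : ℝ => -(r + s) ^ 2 / (4 * t))
        (-(2 * (r + s) ^ 1 * 1) / (4 * t)) r :=
      (((hasDerivAt_id r).add_const s).pow 2).neg.div_const (4 * t)
    have h := e1.exp.fun_sub e2.exp
    have h4 : HasDerivAt (fun r => halfLineKernel t r s)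
        (((r + s) * Real.exp (-(r + s) ^ 2 / (4 * t))
          - (r - s) * Real.exp (-(r - s) ^ 2 / (4 * t))) / (2 * t)) r := by
      unfold halfLineKernel
      refine HasDerivAt.congr_deriv h ?_
      field_simp
      ring
    exact h4.hasDerivWithinAt
  · intro r hr
    rw [interior_Ici] at hr
    have h1 : Real.sqrt (2 * t) ≤ r - s := by
      have := le_of_lt (Set.mem_Ioi.mp hr); linarith
    have h2 : r - s ≤ r + s := by linarith
    have h3 := auxA ht (Set.mem_Ici.2 h1) (Set.mem_Ici.2 (h1.trans h2)) h2
    have : (r + s) * Real.exp (-(r + s) ^ 2 / (4 * t))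
        - (r - s) * Real.exp (-(r - s) ^ 2 / (4 * t)) ≤ 0 := by
      simpa [sub_nonpos] using h3
    exact div_nonpos_of_nonpos_of_nonneg this (by linarith)

/-- The kernel is nonnegative for `r, s > 0`. -/
lemma kernel_nonneg {t r s : ℝ} (ht : 0 < t) (hr : 0 < r) (hs : 0 < s) :
    0 ≤ halfLineKernel t r s := by
  unfold halfLineKernel
  rw [sub_nonneg, Real.exp_le_exp]
  rw [div_le_div_iff_of_pos_right (by linarith : (0:ℝ) < 4 * t)]
  nlinarith

/-- For a bounded measurable nonnegative `g` supported in `(0,S]`, the solution `v` of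
the half-line Dirichlet heat equation is nonnegative for `r > 0` and its `r`-derivative
is nonpositive for `r ≥ √(2t) + S`. -/
theorem halfLineSol_nonneg_and_deriv_nonpos (S : ℝ) (hS : 0 < S) (g : ℝ → ℝ)
    (hmeas : Measurable g) (B : ℝ) (hB : ∀ x, |g x| ≤ B) (hnonneg : ∀ x, 0 ≤ g x)
    (hsupp : Function.support g ⊆ Set.Ioc (0 : ℝ) S) :
    ∀ t : ℝ, 0 < t →
      (∀ r : ℝ, 0 < r → 0 ≤ halfLineSol g t r) ∧
      ∀ r : ℝ, Real.sqrt (2 * t) + S ≤ r → deriv (fun ρ => halfLineSol g t ρ) r ≤ 0 := by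
  intro t ht
  have hB0 : 0 ≤ B := le_trans (abs_nonneg _) (hB 0)
  have hc : (0 : ℝ) < (4 * Real.pi * t) ^ (-(1 : ℝ) / 2) :=
    Real.rpow_pos_of_pos (by positivity) _
  -- integrability
  have hker_meas : ∀ r, Measurable (fun s => halfLineKernel t r s) := by
    intro r
    unfold halfLineKernel
    fun_prop
  have hint : ∀ r : ℝ, IntegrableOn (fun s => halfLineKernel t r s * g s)
      (Set.Ioi (0 : ℝ)) := by
    intro r
    have hsub : Function.support (fun s => halfLineKernel t r s * g s)
        ⊆ Set.Ioc (0 : ℝ) S := by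
      intro s hsmem
      have : g s ≠ 0 := by
        intro h0
        apply hsmem
        simp [h0]
      exact hsupp this
    have hbound : ∀ s, ‖halfLineKernel t r s * g s‖ ≤ B := by
      intro s
      have h1 : |halfLineKernel t r s| ≤ 1 := by
        unfold halfLineKernel
        rw [abs_le]
        constructor
        · nlinarith [Real.exp_pos (-(r - s) ^ 2 / (4 * t)),
            Real.exp_le_one_iff.2 (div_nonpos_of_nonpos_of_nonneg (neg_nonpos_of_nonneg (sq_nonneg (r+s))) (by linarith : (0:ℝ) ≤ 4*t))]
        · nlinarith [Real.exp_pos (-(r + s) ^ 2 / (4 * t)),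
            Real.exp_le_one_iff.2 (div_nonpos_of_nonpos_of_nonneg (neg_nonpos_of_nonneg (sq_nonneg (r-s))) (by linarith : (0:ℝ) ≤ 4*t))]
      calc ‖halfLineKernel t r s * g s‖ = |halfLineKernel t r s| * |g s| := abs_mul _ _
        _ ≤ 1 * B := mul_le_mul h1 (hB s) (abs_nonneg _) zero_le_one
        _ = B := one_mul B
    have hInt : IntegrableOn (fun s => halfLineKernel t r s * g s)
        (Set.Ioc (0 : ℝ) S) := by
      apply Integrable.mono' (integrable_const B)
        ((hker_meas r).mul hmeas).aestronglyMeasurable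
      exact Filter.Eventually.of_forall fun s => hbound s
    have := (integrableOn_iff_integrable_of_support_subset hsub).mp hInt
    exact this.integrableOn
  -- antitonicity of v on [√(2t)+S, ∞)
  have hanti : AntitoneOn (fun ρ => halfLineSol g t ρ)
      (Set.Ici (Real.sqrt (2 * t) + S)) := by
    intro r1 hr1 r2 hr2 h12
    unfold halfLineSol
    apply mul_le_mul_of_nonneg_left _ hc.le
    apply setIntegral_mono_on (hint r2) (hint r1) measurableSet_Ioi
    intro s hs
    rw [Set.mem_Ioi] at hs
    by_cases hg : g s = 0
    · simp [hg]
    · have hsS : s ∈ Set.Ioc (0 : ℝ) S := hsupp hg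
      have hmem1 : r1 ∈ Set.Ici (Real.sqrt (2 * t) + s) := by
        rw [Set.mem_Ici]
        have := hsS.2
        rw [Set.mem_Ici] at hr1
        linarith
      have hmem2 : r2 ∈ Set.Ici (Real.sqrt (2 * t) + s) := by
        rw [Set.mem_Ici] at hmem1 ⊢
        linarith
      exact mul_le_mul_of_nonneg_right (auxB ht hs hmem1 hmem2 h12) (hnonneg s)
  constructor
  · -- nonnegativity
    intro r hr
    unfold halfLineSol
    apply mul_nonneg hc.le
    apply setIntegral_nonneg measurableSet_Ioi
    intro s hs
    exact mul_nonneg (kernel_nonneg ht hr hs) (hnonneg s)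
  · -- derivative nonpositive
    intro r hr
    by_cases hd : DifferentiableAt ℝ (fun ρ => halfLineSol g t ρ) r
    · have H := hd.hasDerivAt
      have Hw := (H.hasDerivWithinAt (s := Set.Ici r))
      rw [hasDerivWithinAt_iff_tendsto_slope] at Hw
      rw [Set.Ici_sdiff_left] at Hw
      refine le_of_tendsto Hw ?_
      filter_upwards [self_mem_nhdsWithin] with ρ hρ
      rw [Set.mem_Ioi] at hρ
      have hle : halfLineSol g t ρ ≤ halfLineSol g t r := by
        apply hanti (Set.mem_Ici.2 hr) (Set.mem_Ici.2 (by linarith)) hρ.le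
      rw [slope_def_field]
      apply div_nonpos_of_nonpos_of_nonneg (by linarith) (by linarith)
    · rw [deriv_zero_of_not_differentiableAt hd]
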